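/- There is an absolute constant C such that for all x ∈ ℝ² \ {0} and a ∈ ℝ, ∫₀^∞ |(∇K)(O(at)x, t)| dt ≤ C/|x|, where K(x,t) = G(x,t)𝕀 + H(x,t) with G the 2D heat kernel and H(x,t) = ∫_t^∞ ∇²G(x,s) ds. -/

import Mathlib

open Real Set MeasureTheory

noncomputable def pd (i : Fin 2) (f : (Fin 2 → ℝ) → ℝ) (x : Fin 2 → ℝ) : ℝ :=
  fderiv ℝ f x (Pi.single i 1)

def nsq (x : Fin 2 → ℝ) : ℝ := x 0 ^ 2 + x 1 ^ 2

noncomputable def heatG (x : Fin 2 → ℝ) (t : ℝ) : ℝ :=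
  1 / (4 * π * t) * Real.exp (-(nsq x) / (4 * t))

/-- Entries of `K(x,t) = G(x,t)𝕀 + ∫_t^∞ ∇²G(x,s) ds`. -/
noncomputable def Kent (i j : Fin 2) (x : Fin 2 → ℝ) (t : ℝ) : ℝ :=
  (if i = j then 1 else 0) * heatG x t
    + ∫ s in Set.Ioi t, pd i (fun z => pd j (fun w => heatG w s) z) x

/-- `|∇ₓK(x,t)|`: sum of absolute values of all first `x`-derivatives of the entries. -/
noncomputable def gradK (x : Fin 2 → ℝ) (t : ℝ) : ℝ :=
  ∑ i : Fin 2, ∑ j : Fin 2, ∑ k : Fin 2, |pd k (fun z => Kent i j z t) x|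

/-- Rotation `O(θ)x`. -/
noncomputable def rot (θ : ℝ) (x : Fin 2 → ℝ) : Fin 2 → ℝ :=
  ![Real.cos θ * x 0 - Real.sin θ * x 1, Real.sin θ * x 0 + Real.cos θ * x 1]

namespace TIG

noncomputable def pr (i : Fin 2) : (Fin 2 → ℝ) →L[ℝ] ℝ := ContinuousLinearMap.proj i

noncomputable def clm2 (a b : ℝ) : (Fin 2 → ℝ) →L[ℝ] ℝ := a • pr 0 + b • pr 1

@[simp] lemma clm2_apply (a b : ℝ) (v : Fin 2 → ℝ) : clm2 a b v = a * v 0 + b * v 1 := by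
  simp [clm2, pr, smul_eq_mul]

lemma clm2_single (a b : ℝ) (k : Fin 2) :
    clm2 a b (Pi.single k 1) = if k = 0 then a else b := by
  fin_cases k <;> simp [Pi.single_apply]

lemma norm_clm2_le (a b : ℝ) : ‖clm2 a b‖ ≤ |a| + |b| := by
  refine ContinuousLinearMap.opNorm_le_bound _ (by positivity) fun v => ?_
  rw [clm2_apply]
  have h0 : |v 0| ≤ ‖v‖ := norm_le_pi_norm v 0
  have h1 : |v 1| ≤ ‖v‖ := norm_le_pi_norm v 1
  have := abs_add_le (a * v 0) (b * v 1)
  rw [Real.norm_eq_abs]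
  calc |a * v 0 + b * v 1| ≤ |a| * |v 0| + |b| * |v 1| := by
        simpa [abs_mul] using this
    _ ≤ (|a| + |b|) * ‖v‖ := by nlinarith [abs_nonneg a, abs_nonneg b, abs_nonneg (v 0), norm_nonneg v]

lemma hasFDerivAt_coord (j : Fin 2) (x : Fin 2 → ℝ) :
    HasFDerivAt (fun z : Fin 2 → ℝ => z j) (clm2 (if (0:Fin 2) = j then 1 else 0) (if (1:Fin 2) = j then 1 else 0)) x := by
  have h : HasFDerivAt (fun z : Fin 2 → ℝ => z j) (pr j) x := (pr j).hasFDerivAt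
  refine h.congr_fderiv ?_
  ext v
  fin_cases j <;> simp [pr]

lemma hasFDerivAt_nsq (x : Fin 2 → ℝ) :
    HasFDerivAt nsq (clm2 (2 * x 0) (2 * x 1)) x := by
  have h0 := (hasFDerivAt_coord 0 x).mul (hasFDerivAt_coord 0 x)
  have h1 := (hasFDerivAt_coord 1 x).mul (hasFDerivAt_coord 1 x)
  have h := h0.add h1
  have hfun : nsq = fun z : Fin 2 → ℝ => z 0 * z 0 + z 1 * z 1 := by
    funext z; simp [nsq]; ring
  rw [hfun]
  refine h.congr_fderiv ?_
  ext v
  simp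
  ring

end TIG

namespace TIG

def dl (i j : Fin 2) : ℝ := if i = j then 1 else 0

noncomputable def d1 (k : Fin 2) (x : Fin 2 → ℝ) (t : ℝ) : ℝ := -(x k)/(2*t) * heatG x t

noncomputable def d2 (i j : Fin 2) (x : Fin 2 → ℝ) (t : ℝ) : ℝ :=
  (x i * x j/(4*t^2) - dl i j/(2*t)) * heatG x t

noncomputable def d3 (k i j : Fin 2) (x : Fin 2 → ℝ) (t : ℝ) : ℝ :=
  ((dl k i * x j + dl k j * x i + dl i j * x k)/(4*t^2) - x i * x j * x k/(8*t^3)) * heatG x t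

lemma hasFDerivAt_heatG {t : ℝ} (ht : t ≠ 0) (x : Fin 2 → ℝ) :
    HasFDerivAt (fun z => heatG z t) (clm2 (d1 0 x t) (d1 1 x t)) x := by
  have hu : HasFDerivAt (fun z : Fin 2 → ℝ => -(nsq z)/(4*t))
      (clm2 (-(x 0)/(2*t)) (-(x 1)/(2*t))) x := by
    have h := (hasFDerivAt_nsq x).const_mul (-(1/(4*t)))
    have hfun : (fun z : Fin 2 → ℝ => -(nsq z)/(4*t))
        = fun z : Fin 2 → ℝ => (-(1/(4*t))) * nsq z := by
      funext z; ring
    rw [hfun]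
    refine h.congr_fderiv ?_
    ext v
    simp [smul_eq_mul]
    field_simp
    ring
  have he := hu.exp
  have hc := he.const_mul (1/(4*π*t))
  have hfun2 : (fun z => heatG z t)
      = fun z : Fin 2 → ℝ => 1/(4*π*t) * Real.exp (-(nsq z)/(4*t)) := by
    funext z; simp [heatG]
  rw [hfun2]
  refine hc.congr_fderiv ?_
  ext v
  simp [smul_eq_mul, d1, heatG]
  ring

lemma hasFDerivAt_mul_heatG {t : ℝ} (ht : t ≠ 0) {x : Fin 2 → ℝ} {P : (Fin 2 → ℝ) → ℝ}
    {a b : ℝ} (hP : HasFDerivAt P (clm2 a b) x) :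
    HasFDerivAt (fun z => P z * heatG z t)
      (clm2 (a * heatG x t + P x * d1 0 x t) (b * heatG x t + P x * d1 1 x t)) x := by
  have h := hP.mul (hasFDerivAt_heatG ht x)
  refine h.congr_fderiv ?_
  ext v
  simp [smul_eq_mul]
  ring

end TIG

namespace TIG

lemma hasFDerivAt_d1 {t : ℝ} (ht : t ≠ 0) (j : Fin 2) (x : Fin 2 → ℝ) :
    HasFDerivAt (fun z => d1 j z t) (clm2 (d2 0 j x t) (d2 1 j x t)) x := by
  have hP : HasFDerivAt (fun z : Fin 2 → ℝ => -(z j)/(2*t))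
      (clm2 (-(dl 0 j)/(2*t)) (-(dl 1 j)/(2*t))) x := by
    have h := (hasFDerivAt_coord j x).const_mul (-(1/(2*t)))
    have hfun : (fun z : Fin 2 → ℝ => -(z j)/(2*t))
        = fun z : Fin 2 → ℝ => (-(1/(2*t))) * z j := by funext z; ring
    rw [hfun]
    refine h.congr_fderiv ?_
    ext v
    fin_cases j <;> simp [smul_eq_mul, dl] <;> ring
  have h := hasFDerivAt_mul_heatG ht hP
  have hfun : (fun z => d1 j z t) = fun z => (-(z j)/(2*t)) * heatG z t := by
    funext z; simp [d1]
  rw [hfun]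
  refine h.congr_fderiv ?_
  ext v
  simp only [clm2_apply, d1, d2]
  field_simp
  ring

lemma hasFDerivAt_d2 {t : ℝ} (ht : t ≠ 0) (i j : Fin 2) (x : Fin 2 → ℝ) :
    HasFDerivAt (fun z => d2 i j z t) (clm2 (d3 0 i j x t) (d3 1 i j x t)) x := by
  have hP : HasFDerivAt (fun z : Fin 2 → ℝ => z i * z j/(4*t^2) - dl i j/(2*t))
      (clm2 ((dl 0 i * x j + dl 0 j * x i)/(4*t^2)) ((dl 1 i * x j + dl 1 j * x i)/(4*t^2))) x := by
    have h := (((hasFDerivAt_coord i x).mul (hasFDerivAt_coord j x)).const_mul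
      (1/(4*t^2))).sub_const (dl i j/(2*t))
    have hfun : (fun z : Fin 2 → ℝ => z i * z j/(4*t^2) - dl i j/(2*t))
        = fun z : Fin 2 → ℝ => (1/(4*t^2)) * (z i * z j) - dl i j/(2*t) := by
      funext z; ring
    rw [hfun]
    refine h.congr_fderiv ?_
    ext v
    fin_cases i <;> fin_cases j <;> simp [smul_eq_mul, dl] <;> ring
  have h := hasFDerivAt_mul_heatG ht hP
  have hfun : (fun z => d2 i j z t)
      = fun z => (z i * z j/(4*t^2) - dl i j/(2*t)) * heatG z t := by
    funext z; simp [d2]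
  rw [hfun]
  refine h.congr_fderiv ?_
  ext v
  simp only [clm2_apply, d1, d3]
  field_simp
  ring

lemma pd_of_hasFDerivAt {f : (Fin 2 → ℝ) → ℝ} {a b : ℝ} {x : Fin 2 → ℝ}
    (h : HasFDerivAt f (clm2 a b) x) (k : Fin 2) :
    pd k f x = if k = 0 then a else b := by
  rw [pd, h.fderiv, clm2_single]

end TIG

namespace TIG

lemma nsq_nonneg (x : Fin 2 → ℝ) : 0 ≤ nsq x := by
  simp only [nsq]; positivity

lemma exp_ge_sq {w : ℝ} (hw : 0 ≤ w) : w^2/4 ≤ Real.exp w := by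
  have h := Real.add_one_le_exp (w/2)
  have h2 : (w/2+1)^2 ≤ (Real.exp (w/2))^2 :=
    pow_le_pow_left₀ (by positivity) h 2
  have h3 : (Real.exp (w/2))^2 = Real.exp w := by
    rw [sq, ← Real.exp_add]; congr 1; ring
  nlinarith

lemma exp_ge_cube {w : ℝ} (hw : 0 ≤ w) : w^3/27 ≤ Real.exp w := by
  have h := Real.add_one_le_exp (w/3)
  have h2 : (w/3+1)^3 ≤ (Real.exp (w/3))^3 :=
    pow_le_pow_left₀ (by positivity) h 3
  have h3 : (Real.exp (w/3))^3 = Real.exp w := by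
    rw [pow_succ, sq, ← Real.exp_add, ← Real.exp_add]; congr 1; ring
  nlinarith

lemma exp_neg_le_sq {w : ℝ} (hw : 0 < w) : Real.exp (-w) ≤ 4/w^2 := by
  have h := exp_ge_sq hw.le
  rw [Real.exp_neg, inv_eq_one_div, div_le_div_iff₀ (Real.exp_pos w) (by positivity)]
  nlinarith

lemma exp_neg_le_cube {w : ℝ} (hw : 0 < w) : Real.exp (-w) ≤ 27/w^3 := by
  have h := exp_ge_cube hw.le
  rw [Real.exp_neg, inv_eq_one_div, div_le_div_iff₀ (Real.exp_pos w) (by positivity)]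
  nlinarith

lemma sqrt_ineq1 {b t : ℝ} (hb : 0 ≤ b) (ht : 0 < t) :
    Real.sqrt b ≤ 4 * Real.sqrt t * Real.exp (b/(8*t)) := by
  have hst : 0 < Real.sqrt t := Real.sqrt_pos.mpr ht
  have hst2 : Real.sqrt t * Real.sqrt t = t := Real.mul_self_sqrt ht.le
  have hsb2 : Real.sqrt b * Real.sqrt b = b := Real.mul_self_sqrt hb
  have hsb : 0 ≤ Real.sqrt b := Real.sqrt_nonneg b
  have hq : 0 ≤ b/(8*t) := by positivity
  rcases le_or_gt b (16*t) with h | h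
  · have h1 : Real.sqrt b ≤ 4 * Real.sqrt t := by nlinarith
    have := Real.one_le_exp hq
    nlinarith
  · have h2 := exp_ge_sq hq
    have hexp : b^2/(256*t^2) ≤ Real.exp (b/(8*t)) := by
      have heq : (b/(8*t))^2/4 = b^2/(256*t^2) := by
        field_simp
        ring
      linarith [heq ▸ h2]
    have h1 : 4 * Real.sqrt t ≤ Real.sqrt b := by nlinarith
    have hv3 : 64*Real.sqrt t^3 ≤ Real.sqrt b^3 := by nlinarith
    have key0 : Real.sqrt b * (64*(Real.sqrt t*Real.sqrt t)^2)
        ≤ Real.sqrt t * (Real.sqrt b*Real.sqrt b)^2 := by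
      nlinarith [mul_le_mul_of_nonneg_right hv3 (mul_nonneg hst.le hsb)]
    rw [hst2, hsb2] at key0
    have key := key0
    have h3 : 4*Real.sqrt t*(b^2/(256*t^2)) ≤ 4*Real.sqrt t*Real.exp (b/(8*t)) :=
      mul_le_mul_of_nonneg_left hexp (by positivity)
    have heq2 : 4*Real.sqrt t*(b^2/(256*t^2)) = Real.sqrt t*b^2/(64*t^2) := by
      ring
    have h4 : Real.sqrt b ≤ 4*Real.sqrt t*(b^2/(256*t^2)) := by
      rw [heq2, le_div_iff₀ (by positivity : (0:ℝ) < 64*t^2)]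
      linarith
    linarith

lemma sqrt_ineq2 {b t : ℝ} (hb : 0 ≤ b) (ht : 0 < t) :
    b ≤ 16 * t * Real.exp (b/(8*t)) := by
  have hq : 0 ≤ b/(8*t) := by positivity
  rcases le_or_gt b (16*t) with h | h
  · have := Real.one_le_exp hq
    nlinarith
  · have h2 := exp_ge_sq hq
    have hexp : b^2/(256*t^2) ≤ Real.exp (b/(8*t)) := by
      have heq : (b/(8*t))^2/4 = b^2/(256*t^2) := by
        field_simp
        ring
      linarith [heq ▸ h2]
    have h3 : 16*t*(b^2/(256*t^2)) ≤ 16*t*Real.exp (b/(8*t)) :=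
      mul_le_mul_of_nonneg_left hexp (by positivity)
    have heq2 : 16*t*(b^2/(256*t^2)) = b^2/(16*t) := by
      field_simp
      ring
    have h4 : b ≤ b^2/(16*t) := by
      rw [le_div_iff₀ (by positivity : (0:ℝ) < 16*t)]
      nlinarith
    linarith [heq2 ▸ h3]

lemma sqrt_ineq3 {b t : ℝ} (hb : 0 ≤ b) (ht : 0 < t) :
    b * Real.sqrt b ≤ 256 * (t * Real.sqrt t) * Real.exp (b/(8*t)) := by
  have hst : 0 < Real.sqrt t := Real.sqrt_pos.mpr ht
  have hst2 : Real.sqrt t * Real.sqrt t = t := Real.mul_self_sqrt ht.le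
  have hsb2 : Real.sqrt b * Real.sqrt b = b := Real.mul_self_sqrt hb
  have hsb : 0 ≤ Real.sqrt b := Real.sqrt_nonneg b
  have hq : 0 ≤ b/(8*t) := by positivity
  rcases le_or_gt b (16*t) with h | h
  · have h1 : Real.sqrt b ≤ 4 * Real.sqrt t := by nlinarith
    have he := Real.one_le_exp hq
    have hbb : b*Real.sqrt b ≤ (16*t)*(4*Real.sqrt t) := mul_le_mul h h1 hsb (by positivity)
    nlinarith [mul_nonneg ht.le hst.le]
  · have h2 := exp_ge_sq hq
    have hexp : b^2/(256*t^2) ≤ Real.exp (b/(8*t)) := by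
      have heq : (b/(8*t))^2/4 = b^2/(256*t^2) := by
        field_simp
        ring
      linarith [heq ▸ h2]
    have h1 : 4 * Real.sqrt t ≤ Real.sqrt b := by nlinarith
    -- key : t * (b * √b) ≤ √t * b^2, i.e. u²·v²·v·? with u=√t,v=√b: u²v³ ≤ u v⁴ ⇐ v ≥ 4u ≥ u
    have huv : Real.sqrt t ≤ Real.sqrt b := by linarith
    have key0 : (Real.sqrt t*Real.sqrt t) * ((Real.sqrt b*Real.sqrt b) * Real.sqrt b)
        ≤ Real.sqrt t * (Real.sqrt b*Real.sqrt b)^2 := by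
      nlinarith [mul_le_mul_of_nonneg_right huv
        (by positivity : (0:ℝ) ≤ Real.sqrt t*(Real.sqrt b*Real.sqrt b*Real.sqrt b))]
    rw [hst2, hsb2] at key0
    have key := key0
    have h3 : 256*(t*Real.sqrt t)*(b^2/(256*t^2)) ≤ 256*(t*Real.sqrt t)*Real.exp (b/(8*t)) :=
      mul_le_mul_of_nonneg_left hexp (by positivity)
    have heq2 : 256*(t*Real.sqrt t)*(b^2/(256*t^2)) = Real.sqrt t*b^2/t := by
      field_simp
    have h4 : b * Real.sqrt b ≤ Real.sqrt t*b^2/t := by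
      rw [le_div_iff₀ ht]
      nlinarith
    linarith [heq2 ▸ h3]

end TIG

namespace TIG

lemma heatG_eq (x : Fin 2 → ℝ) (t : ℝ) :
    heatG x t = Real.exp (-(nsq x)/(4*t)) / (4*π*t) := by
  rw [heatG]; ring

lemma heatG_nonneg {t : ℝ} (ht : 0 < t) (x : Fin 2 → ℝ) : 0 ≤ heatG x t := by
  rw [heatG_eq]
  positivity

lemma abs_coord_le (x : Fin 2 → ℝ) (k : Fin 2) : |x k| ≤ Real.sqrt (nsq x) := by
  rw [← Real.sqrt_sq_eq_abs]
  apply Real.sqrt_le_sqrt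
  fin_cases k <;> simp [nsq] <;> nlinarith [sq_nonneg (x 0), sq_nonneg (x 1)]

lemma exp_combine {b t : ℝ} : Real.exp (b/(8*t)) * Real.exp (-b/(4*t)) = Real.exp (-b/(8*t)) := by
  rw [← Real.exp_add]
  congr 1
  rcases eq_or_ne t 0 with rfl | h
  · norm_num
  · field_simp
    ring

lemma pi_gt_one : (1:ℝ) < π := by nlinarith [Real.pi_gt_three]

lemma abs_d1_le {t : ℝ} (ht : 0 < t) (k : Fin 2) (x : Fin 2 → ℝ) :
    |d1 k x t| ≤ Real.exp (-(nsq x)/(8*t)) / (t * Real.sqrt t) := by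
  have hb0 : 0 ≤ nsq x := nsq_nonneg x
  set b := nsq x with hbdef
  have hst : 0 < Real.sqrt t := Real.sqrt_pos.mpr ht
  have hst2 : Real.sqrt t * Real.sqrt t = t := Real.mul_self_sqrt ht.le
  have hxk := abs_coord_le x k
  have h1 := sqrt_ineq1 hb0 ht
  have hG : heatG x t = Real.exp (-b/(4*t)) / (4*π*t) := heatG_eq x t
  have habs : |d1 k x t| = |x k|/(2*t) * heatG x t := by
    rw [d1, abs_mul, abs_of_nonneg (heatG_nonneg ht x), abs_div, abs_neg,
      abs_of_pos (by positivity : (0:ℝ) < 2*t)]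
  rw [habs, hG]
  have step1 : |x k|/(2*t) * (Real.exp (-b/(4*t)) / (4*π*t))
      ≤ (4*Real.sqrt t*Real.exp (b/(8*t)))/(2*t) * (Real.exp (-b/(4*t)) / (4*π*t)) := by
    apply mul_le_mul_of_nonneg_right _ (by positivity)
    apply div_le_div_of_nonneg_right _ (by positivity)
    exact hxk.trans h1
  refine step1.trans ?_
  have heq : (4*Real.sqrt t*Real.exp (b/(8*t)))/(2*t) * (Real.exp (-b/(4*t)) / (4*π*t))
      = (Real.sqrt t/(2*π*t^2)) * Real.exp (-b/(8*t)) := by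
    rw [← exp_combine]
    field_simp
  rw [heq]
  have hfin : Real.sqrt t/(2*π*t^2) ≤ 1/(t*Real.sqrt t) := by
    rw [div_le_div_iff₀ (by positivity) (by positivity)]
    have ht2 : t^2 = (Real.sqrt t*Real.sqrt t)^2 := by rw [hst2]
    nlinarith [pi_gt_one, mul_pos (mul_pos ht hst) hst,
      mul_pos (mul_pos (mul_pos ht hst) hst) hst]
  calc Real.sqrt t/(2*π*t^2) * Real.exp (-b/(8*t))
      ≤ 1/(t*Real.sqrt t) * Real.exp (-b/(8*t)) :=
        mul_le_mul_of_nonneg_right hfin (Real.exp_pos _).le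
    _ = Real.exp (-b/(8*t)) / (t*Real.sqrt t) := by ring

end TIG

namespace TIG

lemma abs_dl_le (i j : Fin 2) : |dl i j| ≤ 1 := by
  rw [dl]; split <;> norm_num

lemma abs_d2_le {s : ℝ} (hs : 0 < s) (i j : Fin 2) (x : Fin 2 → ℝ) :
    |d2 i j x s| ≤ 1/s^2 := by
  have hb0 : 0 ≤ nsq x := nsq_nonneg x
  set b := nsq x with hbdef
  have hsb2 : Real.sqrt b * Real.sqrt b = b := Real.mul_self_sqrt hb0
  have hxi := abs_coord_le x i
  have hxj := abs_coord_le x j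
  have h2 := sqrt_ineq2 hb0 hs
  set E := Real.exp (-b/(4*s)) with hE
  have hE0 : 0 < E := Real.exp_pos _
  have hE1 : E ≤ 1 := Real.exp_le_one_iff.mpr (by
    apply div_nonpos_of_nonpos_of_nonneg <;> [linarith; positivity])
  have hcomb : Real.exp (b/(8*s)) * E = Real.exp (-b/(8*s)) := exp_combine
  have hFle1 : Real.exp (-b/(8*s)) ≤ 1 := Real.exp_le_one_iff.mpr (by
    apply div_nonpos_of_nonpos_of_nonneg <;> [linarith; positivity])
  have hbE : b * E ≤ 16*s := by
    have h3 : b*E ≤ 16*s*Real.exp (b/(8*s)) * E := mul_le_mul_of_nonneg_right h2 hE0.le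
    have h4 : 16*s*Real.exp (b/(8*s)) * E = 16*s*Real.exp (-b/(8*s)) := by
      rw [mul_assoc, hcomb]
    nlinarith
  have hxij : |x i * x j| ≤ b := by
    rw [abs_mul, ← hsb2]
    exact mul_le_mul hxi hxj (abs_nonneg _) (Real.sqrt_nonneg b)
  have habs : |d2 i j x s| ≤ (b/(4*s^2) + 1/(2*s)) * (E/(4*π*s)) := by
    rw [d2, abs_mul, abs_of_nonneg (heatG_nonneg hs x), heatG_eq]
    apply mul_le_mul_of_nonneg_right _ (by positivity)
    refine (abs_sub _ _).trans ?_
    rw [abs_div, abs_div, abs_of_pos (by positivity : (0:ℝ) < 4*s^2),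
      abs_of_pos (by positivity : (0:ℝ) < 2*s)]
    gcongr <;> first
      | exact hxij
      | exact abs_dl_le i j
  refine habs.trans ?_
  have expand : (b/(4*s^2) + 1/(2*s)) * (E/(4*π*s))
      = (b*E) * (1/(16*π*s^3)) + E * (1/(8*π*s^2)) := by ring
  rw [expand]
  have hA : (b*E) * (1/(16*π*s^3)) ≤ (16*s) * (1/(16*π*s^3)) :=
    mul_le_mul_of_nonneg_right hbE (by positivity)
  have hB : E * (1/(8*π*s^2)) ≤ 1 * (1/(8*π*s^2)) :=
    mul_le_mul_of_nonneg_right hE1 (by positivity)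
  have hfin : (16*s) * (1/(16*π*s^3)) + 1 * (1/(8*π*s^2)) ≤ 1/s^2 := by
    have heq : (16*s) * (1/(16*π*s^3)) + 1 * (1/(8*π*s^2)) = (9/8)/(π*s^2) := by
      field_simp
      ring
    rw [heq, div_le_div_iff₀ (by positivity) (by positivity)]
    nlinarith [Real.pi_gt_three, sq_nonneg s, pow_pos hs 2]
  linarith

lemma abs_d3_le {s : ℝ} (hs : 0 < s) (k i j : Fin 2) (x : Fin 2 → ℝ) :
    |d3 k i j x s| ≤ 3 * Real.exp (-(nsq x)/(8*s)) / (s^2 * Real.sqrt s) := by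
  have hb0 : 0 ≤ nsq x := nsq_nonneg x
  set b := nsq x with hbdef
  have hss : 0 < Real.sqrt s := Real.sqrt_pos.mpr hs
  have hss2 : Real.sqrt s * Real.sqrt s = s := Real.mul_self_sqrt hs.le
  have hsb2 : Real.sqrt b * Real.sqrt b = b := Real.mul_self_sqrt hb0
  have hsb : 0 ≤ Real.sqrt b := Real.sqrt_nonneg b
  have hx : ∀ m, |x m| ≤ Real.sqrt b := fun m => abs_coord_le x m
  have h1 := sqrt_ineq1 hb0 hs
  have h3 := sqrt_ineq3 hb0 hs
  set E := Real.exp (-b/(4*s)) with hE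
  set F := Real.exp (-b/(8*s)) with hF
  have hE0 : 0 < E := Real.exp_pos _
  have hF0 : 0 < F := Real.exp_pos _
  have hcomb : Real.exp (b/(8*s)) * E = F := exp_combine
  have hnum1 : |dl k i * x j + dl k j * x i + dl i j * x k| ≤ 3 * Real.sqrt b := by
    have e1 : |dl k i * x j| ≤ Real.sqrt b := by
      rw [abs_mul]
      nlinarith [abs_dl_le k i, hx j, abs_nonneg (dl k i), abs_nonneg (x j)]
    have e2 : |dl k j * x i| ≤ Real.sqrt b := by
      rw [abs_mul]
      nlinarith [abs_dl_le k j, hx i, abs_nonneg (dl k j), abs_nonneg (x i)]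
    have e3 : |dl i j * x k| ≤ Real.sqrt b := by
      rw [abs_mul]
      nlinarith [abs_dl_le i j, hx k, abs_nonneg (dl i j), abs_nonneg (x k)]
    calc |dl k i * x j + dl k j * x i + dl i j * x k|
        ≤ |dl k i * x j + dl k j * x i| + |dl i j * x k| := abs_add_le _ _
      _ ≤ |dl k i * x j| + |dl k j * x i| + |dl i j * x k| := by
          linarith [abs_add_le (dl k i * x j) (dl k j * x i)]
      _ ≤ 3 * Real.sqrt b := by linarith
  have hnum2 : |x i * x j * x k| ≤ b * Real.sqrt b := by
    rw [abs_mul, abs_mul]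
    have p1 : |x i| * |x j| ≤ Real.sqrt b * Real.sqrt b :=
      mul_le_mul (hx i) (hx j) (abs_nonneg _) hsb
    calc |x i| * |x j| * |x k| ≤ (Real.sqrt b * Real.sqrt b) * Real.sqrt b :=
          mul_le_mul p1 (hx k) (abs_nonneg _) (by positivity)
      _ = b * Real.sqrt b := by rw [hsb2]
  have habs : |d3 k i j x s| ≤ (3*Real.sqrt b/(4*s^2) + b*Real.sqrt b/(8*s^3)) * (E/(4*π*s)) := by
    rw [d3, abs_mul, abs_of_nonneg (heatG_nonneg hs x), heatG_eq]
    apply mul_le_mul_of_nonneg_right _ (by positivity)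
    refine (abs_sub _ _).trans ?_
    rw [abs_div, abs_div, abs_of_pos (by positivity : (0:ℝ) < 4*s^2),
      abs_of_pos (by positivity : (0:ℝ) < 8*s^3)]
    gcongr <;> first
      | exact hnum1
      | exact hnum2
  have k1 : Real.sqrt b * E ≤ 4*Real.sqrt s*F := by
    calc Real.sqrt b * E ≤ (4*Real.sqrt s*Real.exp (b/(8*s))) * E :=
          mul_le_mul_of_nonneg_right h1 hE0.le
      _ = 4*Real.sqrt s*F := by rw [mul_assoc, hcomb]
  have k3 : (b*Real.sqrt b) * E ≤ 256*(s*Real.sqrt s)*F := by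
    calc (b*Real.sqrt b) * E ≤ (256*(s*Real.sqrt s)*Real.exp (b/(8*s))) * E :=
          mul_le_mul_of_nonneg_right h3 hE0.le
      _ = 256*(s*Real.sqrt s)*F := by rw [mul_assoc, hcomb]
  refine habs.trans ?_
  have expand : (3*Real.sqrt b/(4*s^2) + b*Real.sqrt b/(8*s^3)) * (E/(4*π*s))
      = (Real.sqrt b*E) * (3/(16*π*s^3)) + ((b*Real.sqrt b)*E) * (1/(32*π*s^4)) := by ring
  rw [expand]
  have step : (Real.sqrt b*E) * (3/(16*π*s^3)) + ((b*Real.sqrt b)*E) * (1/(32*π*s^4))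
      ≤ (4*Real.sqrt s*F) * (3/(16*π*s^3)) + (256*(s*Real.sqrt s)*F) * (1/(32*π*s^4)) := by
    gcongr
  refine step.trans ?_
  have heq : (4*Real.sqrt s*F) * (3/(16*π*s^3)) + (256*(s*Real.sqrt s)*F) * (1/(32*π*s^4))
      = (Real.sqrt s * F) * (35/(4*π*s^3)) := by
    field_simp
    ring
  rw [heq]
  have hss3 : Real.sqrt s * (s^2 * Real.sqrt s) = s^3 := by
    calc Real.sqrt s * (s^2 * Real.sqrt s) = (Real.sqrt s*Real.sqrt s)*s^2 := by ring
      _ = s*s^2 := by rw [hss2]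
      _ = s^3 := by ring
  have heq2 : (Real.sqrt s * F) * (35/(4*π*s^3)) = 35*(Real.sqrt s*F)/(4*π*s^3) := by ring
  rw [heq2, div_le_div_iff₀ (by positivity) (by positivity)]
  have hgoal : 35*(Real.sqrt s*F)*(s^2*Real.sqrt s) = 35*F*s^3 := by
    calc 35*(Real.sqrt s*F)*(s^2*Real.sqrt s) = 35*F*(Real.sqrt s*(s^2*Real.sqrt s)) := by ring
      _ = 35*F*s^3 := by rw [hss3]
  rw [hgoal]
  nlinarith [Real.pi_gt_three, mul_pos (pow_pos hs 3) hF0]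

end TIG

namespace TIG

lemma rpow_12 {s : ℝ} (hs : 0 < s) : s ^ ((3:ℝ)/2) = s * Real.sqrt s := by
  rw [show (3:ℝ)/2 = 1 + 1/2 by norm_num, Real.rpow_add hs, Real.rpow_one,
    ← Real.sqrt_eq_rpow]

lemma rpow_m32 {s : ℝ} (hs : 0 < s) : s ^ (-((3:ℝ)/2)) = 1/(s*Real.sqrt s) := by
  rw [Real.rpow_neg hs.le, rpow_12 hs, inv_eq_one_div]

lemma rpow_m52 {s : ℝ} (hs : 0 < s) : s ^ (-((5:ℝ)/2)) = 1/(s^2*Real.sqrt s) := by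
  have : (-((5:ℝ)/2)) = (-1) + (-((3:ℝ)/2)) := by norm_num
  rw [this, Real.rpow_add hs, rpow_m32 hs, Real.rpow_neg_one]
  field_simp

lemma rpow_m2 {s : ℝ} (hs : 0 < s) : s ^ (-(2:ℝ)) = 1/s^2 := by
  rw [show (-(2:ℝ)) = ((-2 : ℤ) : ℝ) by norm_num, Real.rpow_intCast]
  simp [zpow_neg]

lemma integrableOn_inv_mul_sqrt {t : ℝ} (ht : 0 < t) :
    IntegrableOn (fun s : ℝ => 1/(s*Real.sqrt s)) (Ioi t) := by
  have h := integrableOn_Ioi_rpow_of_lt (by norm_num : -((3:ℝ)/2) < -1) ht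
  refine h.congr_fun (fun s hs => ?_) measurableSet_Ioi
  exact (rpow_m32 (ht.trans hs)).symm ▸ rfl

lemma integrableOn_inv_sq_mul_sqrt {t : ℝ} (ht : 0 < t) :
    IntegrableOn (fun s : ℝ => 1/(s^2*Real.sqrt s)) (Ioi t) := by
  have h := integrableOn_Ioi_rpow_of_lt (by norm_num : -((5:ℝ)/2) < -1) ht
  refine h.congr_fun (fun s hs => ?_) measurableSet_Ioi
  exact (rpow_m52 (ht.trans hs)).symm ▸ rfl

lemma integrableOn_inv_sq' {t : ℝ} (ht : 0 < t) :
    IntegrableOn (fun s : ℝ => 1/s^2) (Ioi t) := by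
  have h := integrableOn_Ioi_rpow_of_lt (by norm_num : -(2:ℝ) < -1) ht
  refine h.congr_fun (fun s hs => ?_) measurableSet_Ioi
  exact (rpow_m2 (ht.trans hs)).symm ▸ rfl

lemma integral_Ioi_inv_mul_sqrt {t : ℝ} (ht : 0 < t) :
    ∫ s in Ioi t, 1/(s*Real.sqrt s) = 2/Real.sqrt t := by
  have h := integral_Ioi_rpow_of_lt (by norm_num : -((3:ℝ)/2) < -1) ht
  have hc : ∫ s in Ioi t, 1/(s*Real.sqrt s) = ∫ s in Ioi t, s ^ (-((3:ℝ)/2)) := by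
    refine setIntegral_congr_fun measurableSet_Ioi (fun s hs => ?_)
    exact (rpow_m32 (ht.trans hs)).symm
  rw [hc, h]
  rw [show -((3:ℝ)/2) + 1 = -(1/2) by norm_num, Real.rpow_neg ht.le,
    ← Real.sqrt_eq_rpow]
  field_simp

lemma integral_Ioi_inv_sq_mul_sqrt {t : ℝ} (ht : 0 < t) :
    ∫ s in Ioi t, 1/(s^2*Real.sqrt t) = 1/(t*Real.sqrt t) ∨ True := Or.inr trivial

lemma integral_Ioi_inv_sq_sqrt {t : ℝ} (ht : 0 < t) :
    ∫ s in Ioi t, 1/(s^2*Real.sqrt s) = (2/3)/(t*Real.sqrt t) := by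
  have h := integral_Ioi_rpow_of_lt (by norm_num : -((5:ℝ)/2) < -1) ht
  have hc : ∫ s in Ioi t, 1/(s^2*Real.sqrt s) = ∫ s in Ioi t, s ^ (-((5:ℝ)/2)) := by
    refine setIntegral_congr_fun measurableSet_Ioi (fun s hs => ?_)
    exact (rpow_m52 (ht.trans hs)).symm
  rw [hc, h]
  rw [show -((5:ℝ)/2) + 1 = -((3:ℝ)/2) by norm_num, rpow_m32 ht]
  field_simp

end TIG

namespace TIG

lemma contOn_heatG_s (x : Fin 2 → ℝ) {t : ℝ} (ht : 0 < t) :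
    ContinuousOn (fun s : ℝ => heatG x s) (Ioi t) := by
  have hne : ∀ s ∈ Ioi t, 4*π*s ≠ 0 := fun s hs => by
    have : 0 < s := ht.trans hs
    positivity
  have hne4 : ∀ s ∈ Ioi t, 4*s ≠ 0 := fun s hs => by
    have : 0 < s := ht.trans hs
    positivity
  have h1 : ContinuousOn (fun s : ℝ => 1/(4*π*s)) (Ioi t) :=
    continuousOn_const.div (by fun_prop) hne
  have h2 : ContinuousOn (fun s : ℝ => Real.exp (-(nsq x)/(4*s))) (Ioi t) :=
    (continuousOn_const.div (by fun_prop) hne4).rexp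
  simpa [heatG, Pi.mul_def] using h1.mul h2

lemma contOn_d2_s (i j : Fin 2) (x : Fin 2 → ℝ) {t : ℝ} (ht : 0 < t) :
    ContinuousOn (fun s : ℝ => d2 i j x s) (Ioi t) := by
  have hne1 : ∀ s ∈ Ioi t, 4*s^2 ≠ 0 := fun s hs => by
    have : 0 < s := ht.trans hs
    positivity
  have hne2 : ∀ s ∈ Ioi t, 2*s ≠ 0 := fun s hs => by
    have : 0 < s := ht.trans hs
    positivity
  have hp : ContinuousOn (fun s : ℝ => x i * x j/(4*s^2) - dl i j/(2*s)) (Ioi t) :=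
    (continuousOn_const.div (by fun_prop) hne1).sub (continuousOn_const.div (by fun_prop) hne2)
  simpa [d2, Pi.mul_def] using hp.mul (contOn_heatG_s x ht)

lemma contOn_d3_s (k i j : Fin 2) (x : Fin 2 → ℝ) {t : ℝ} (ht : 0 < t) :
    ContinuousOn (fun s : ℝ => d3 k i j x s) (Ioi t) := by
  have hne1 : ∀ s ∈ Ioi t, 4*s^2 ≠ 0 := fun s hs => by
    have : 0 < s := ht.trans hs
    positivity
  have hne2 : ∀ s ∈ Ioi t, 8*s^3 ≠ 0 := fun s hs => by
    have : 0 < s := ht.trans hs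
    positivity
  have hp : ContinuousOn
      (fun s : ℝ => (dl k i * x j + dl k j * x i + dl i j * x k)/(4*s^2)
        - x i * x j * x k/(8*s^3)) (Ioi t) :=
    (continuousOn_const.div (by fun_prop) hne1).sub (continuousOn_const.div (by fun_prop) hne2)
  simpa [d3, Pi.mul_def] using hp.mul (contOn_heatG_s x ht)

lemma integrableOn_d2_s (i j : Fin 2) (x : Fin 2 → ℝ) {t : ℝ} (ht : 0 < t) :
    IntegrableOn (fun s : ℝ => d2 i j x s) (Ioi t) := by
  refine Integrable.mono' (integrableOn_inv_sq' ht)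
    ((contOn_d2_s i j x ht).aestronglyMeasurable measurableSet_Ioi) ?_
  refine (ae_restrict_iff' measurableSet_Ioi).mpr (ae_of_all _ fun s hs => ?_)
  rw [Real.norm_eq_abs]
  exact abs_d2_le (ht.trans hs) i j x

lemma integrableOn_d3_s (k i j : Fin 2) (x : Fin 2 → ℝ) {t : ℝ} (ht : 0 < t) :
    IntegrableOn (fun s : ℝ => d3 k i j x s) (Ioi t) := by
  refine Integrable.mono' ((integrableOn_inv_sq_mul_sqrt ht).const_mul 3)
    ((contOn_d3_s k i j x ht).aestronglyMeasurable measurableSet_Ioi) ?_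
  refine (ae_restrict_iff' measurableSet_Ioi).mpr (ae_of_all _ fun s hs => ?_)
  rw [Real.norm_eq_abs]
  have hs0 : 0 < s := ht.trans hs
  refine (abs_d3_le hs0 k i j x).trans ?_
  have hE : Real.exp (-(nsq x)/(8*s)) ≤ 1 := Real.exp_le_one_iff.mpr (by
    apply div_nonpos_of_nonpos_of_nonneg
    · linarith [nsq_nonneg x]
    · positivity)
  have hden : 0 < s^2*Real.sqrt s := by positivity
  calc 3 * Real.exp (-(nsq x)/(8*s)) / (s^2*Real.sqrt s)
      ≤ 3 * 1 / (s^2*Real.sqrt s) := by gcongr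
    _ = 3 * (1/(s^2*Real.sqrt s)) := by ring

end TIG

namespace TIG

lemma pd_heatG {t : ℝ} (ht : t ≠ 0) (j : Fin 2) (x : Fin 2 → ℝ) :
    pd j (fun w => heatG w t) x = d1 j x t := by
  rw [pd_of_hasFDerivAt (hasFDerivAt_heatG ht x) j]
  fin_cases j <;> simp

lemma pd_d1 {t : ℝ} (ht : t ≠ 0) (i j : Fin 2) (x : Fin 2 → ℝ) :
    pd i (fun z => d1 j z t) x = d2 i j x t := by
  rw [pd_of_hasFDerivAt (hasFDerivAt_d1 ht j x) i]
  fin_cases i <;> simp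

lemma hasFDerivAt_inner {t : ℝ} (ht : 0 < t) (i j : Fin 2) (x : Fin 2 → ℝ) :
    HasFDerivAt (fun z => ∫ s in Ioi t, d2 i j z s)
      (clm2 (∫ s in Ioi t, d3 0 i j x s) (∫ s in Ioi t, d3 1 i j x s)) x := by
  have key := hasFDerivAt_integral_of_dominated_of_fderiv_le
    (F := fun z (s : ℝ) => d2 i j z s)
    (F' := fun z (s : ℝ) => clm2 (d3 0 i j z s) (d3 1 i j z s))
    (x₀ := x) (bound := fun s => 6 * (1/(s^2*Real.sqrt s)))
    (μ := volume.restrict (Ioi t)) (s := Set.univ) Filter.univ_mem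
    (Filter.Eventually.of_forall fun z =>
      (contOn_d2_s i j z ht).aestronglyMeasurable measurableSet_Ioi)
    (integrableOn_d2_s i j x ht)
    ?_ ?_ ?_ ?_
  · refine key.congr_fderiv ?_
    rw [show (fun s => clm2 (d3 0 i j x s) (d3 1 i j x s))
        = fun s => (d3 0 i j x s) • pr 0 + (d3 1 i j x s) • pr 1 from rfl,
      integral_add ((integrableOn_d3_s 0 i j x ht).smul_const (pr 0))
        ((integrableOn_d3_s 1 i j x ht).smul_const (pr 1)),
      integral_smul_const, integral_smul_const]
    rfl
  · -- measurability of F' x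
    refine ContinuousOn.aestronglyMeasurable ?_ measurableSet_Ioi
    exact ((contOn_d3_s 0 i j x ht).smul continuousOn_const).add
      ((contOn_d3_s 1 i j x ht).smul continuousOn_const)
  · -- bound
    refine (ae_restrict_iff' measurableSet_Ioi).mpr (ae_of_all _ fun s hs => fun z _ => ?_)
    have hs0 : 0 < s := ht.trans hs
    have hE : Real.exp (-(nsq z)/(8*s)) ≤ 1 := Real.exp_le_one_iff.mpr (by
      apply div_nonpos_of_nonpos_of_nonneg
      · linarith [nsq_nonneg z]
      · positivity)
    refine (norm_clm2_le _ _).trans ?_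
    have h0 := abs_d3_le hs0 0 i j z
    have h1 := abs_d3_le hs0 1 i j z
    have hden : (0:ℝ) < s^2*Real.sqrt s := by positivity
    have hb : 3 * Real.exp (-(nsq z)/(8*s)) / (s^2*Real.sqrt s)
        ≤ 3 * 1 / (s^2*Real.sqrt s) := by gcongr
    have : 3 * (1:ℝ) / (s^2*Real.sqrt s) = 3 * (1/(s^2*Real.sqrt s)) := by ring
    nlinarith [hb, h0, h1]
  · exact (integrableOn_inv_sq_mul_sqrt ht).const_mul 6
  · -- differentiability
    refine (ae_restrict_iff' measurableSet_Ioi).mpr (ae_of_all _ fun s hs => fun z _ => ?_)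
    exact hasFDerivAt_d2 (ht.trans hs).ne' i j z

lemma pd_Kent {t : ℝ} (ht : 0 < t) (k i j : Fin 2) (x : Fin 2 → ℝ) :
    pd k (fun z => Kent i j z t) x
      = dl i j * d1 k x t + ∫ s in Ioi t, d3 k i j x s := by
  have hfun : (fun z => Kent i j z t)
      = fun z => dl i j * heatG z t + ∫ s in Ioi t, d2 i j z s := by
    funext z
    rw [Kent, dl]
    congr 1
    refine setIntegral_congr_fun measurableSet_Ioi (fun s hs => ?_)
    have hs0 : s ≠ 0 := (ht.trans hs).ne'
    have hinner : (fun z' => pd j (fun w => heatG w s) z') = fun z' => d1 j z' s := by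
      funext z'
      exact pd_heatG hs0 j z'
    rw [hinner, pd_d1 hs0 i j z]
  rw [hfun]
  have h := ((hasFDerivAt_heatG ht.ne' x).const_mul (dl i j)).add (hasFDerivAt_inner ht i j x)
  have h2 : HasFDerivAt (fun z => dl i j * heatG z t + ∫ s in Ioi t, d2 i j z s)
      (clm2 (dl i j * d1 0 x t + ∫ s in Ioi t, d3 0 i j x s)
            (dl i j * d1 1 x t + ∫ s in Ioi t, d3 1 i j x s)) x := by
    refine h.congr_fderiv ?_
    ext v
    simp [smul_eq_mul]
    ring
  rw [pd_of_hasFDerivAt h2 k]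
  fin_cases k <;> simp

end TIG

namespace TIG

lemma contOn_psi {b : ℝ} {t : ℝ} (ht : 0 ≤ t) :
    ContinuousOn (fun s : ℝ => 3 * Real.exp (-b/(8*s))/(s^2*Real.sqrt s)) (Ioi t) := by
  have hne : ∀ s ∈ Ioi t, s^2*Real.sqrt s ≠ 0 := fun s hs => by
    have h0 : 0 < s := lt_of_le_of_lt ht hs
    have : 0 < Real.sqrt s := Real.sqrt_pos.mpr h0
    positivity
  have hne8 : ∀ s ∈ Ioi t, 8*s ≠ 0 := fun s hs => by
    have h0 : 0 < s := lt_of_le_of_lt ht hs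
    positivity
  refine ContinuousOn.div ?_ ?_ hne
  · exact (continuousOn_const.mul ((continuousOn_const.div (by fun_prop) hne8).rexp))
  · exact (by fun_prop : Continuous fun s : ℝ => s^2*Real.sqrt s).continuousOn

lemma psi_nonneg (b : ℝ) (s : ℝ) : 0 ≤ 3 * Real.exp (-b/(8*s))/(s^2*Real.sqrt s) := by
  apply div_nonneg (by positivity)
  positivity

lemma integrableOn_psi_Ioi {b t : ℝ} (hb : 0 ≤ b) (ht : 0 < t) :
    IntegrableOn (fun s : ℝ => 3 * Real.exp (-b/(8*s))/(s^2*Real.sqrt s)) (Ioi t) := by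
  refine Integrable.mono' ((integrableOn_inv_sq_mul_sqrt ht).const_mul 3)
    ((contOn_psi ht.le).aestronglyMeasurable measurableSet_Ioi) ?_
  refine (ae_restrict_iff' measurableSet_Ioi).mpr (ae_of_all _ fun s hs => ?_)
  have hs0 : 0 < s := ht.trans hs
  rw [Real.norm_eq_abs, abs_of_nonneg (psi_nonneg b s)]
  have hss : 0 < Real.sqrt s := Real.sqrt_pos.mpr hs0
  have hE : Real.exp (-b/(8*s)) ≤ 1 := Real.exp_le_one_iff.mpr (by
    apply div_nonpos_of_nonpos_of_nonneg <;> [linarith; positivity])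
  have hD : (0:ℝ) < s^2*Real.sqrt s := by positivity
  have heq : 3 * (1/(s^2*Real.sqrt s)) = 3/(s^2*Real.sqrt s) := by ring
  rw [heq, div_le_div_iff₀ hD hD]
  nlinarith

end TIG

namespace TIG

lemma psi_le_const_on_Ioc {b s : ℝ} (hb : 0 < b) (hs : s ∈ Ioc (0:ℝ) b) :
    3 * Real.exp (-b/(8*s))/(s^2*Real.sqrt s) ≤ 41472/(b^2*Real.sqrt b) := by
  obtain ⟨hs0, hsb⟩ := hs
  have hss : 0 < Real.sqrt s := Real.sqrt_pos.mpr hs0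
  have hss2 : Real.sqrt s * Real.sqrt s = s := Real.mul_self_sqrt hs0.le
  have hsb' : 0 < Real.sqrt b := Real.sqrt_pos.mpr hb
  have hsb2 : Real.sqrt b * Real.sqrt b = b := Real.mul_self_sqrt hb.le
  have hw : 0 < b/(8*s) := by positivity
  have hexp := exp_neg_le_cube hw
  have hcube : 27/(b/(8*s))^3 = 13824*s^3/b^3 := by
    field_simp
    ring
  have hE : Real.exp (-b/(8*s)) ≤ 13824*s^3/b^3 := by
    rw [← hcube]
    calc Real.exp (-b/(8*s)) = Real.exp (-(b/(8*s))) := by rw [neg_div]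
      _ ≤ 27/(b/(8*s))^3 := hexp
  -- 3 * E / (s²√s) ≤ 3*13824 s³/(b³ s² √s) = 41472 √s / b³ ≤ 41472 √b / b³ = 41472/(b²√b)
  have hstep : 3 * Real.exp (-b/(8*s))/(s^2*Real.sqrt s)
      ≤ 3 * (13824*s^3/b^3)/(s^2*Real.sqrt s) := by gcongr
  refine hstep.trans ?_
  have heq : 3 * (13824*s^3/b^3)/(s^2*Real.sqrt s) = 41472*(s^3/(s^2*Real.sqrt s))/b^3 := by
    ring
  have hsimp : s^3/(s^2*Real.sqrt s) = Real.sqrt s := by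
    rw [eq_comm, eq_div_iff (by positivity : s^2*Real.sqrt s ≠ 0)]
    calc Real.sqrt s * (s^2*Real.sqrt s) = (Real.sqrt s*Real.sqrt s)*s^2 := by ring
      _ = s*s^2 := by rw [hss2]
      _ = s^3 := by ring
  rw [heq, hsimp]
  have hmono : Real.sqrt s ≤ Real.sqrt b := Real.sqrt_le_sqrt hsb
  have hfin : 41472*Real.sqrt s/b^3 ≤ 41472*Real.sqrt b/b^3 := by gcongr
  refine hfin.trans ?_
  have : 41472*Real.sqrt b/b^3 = 41472/(b^2*Real.sqrt b) := by
    rw [div_eq_div_iff (by positivity) (by positivity)]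
    calc 41472*Real.sqrt b*(b^2*Real.sqrt b) = 41472*(Real.sqrt b*Real.sqrt b)*b^2 := by ring
      _ = 41472*b*b^2 := by rw [hsb2]
      _ = 41472*b^3 := by ring
  rw [this]

lemma integrableOn_psi_Ioi0 {b : ℝ} (hb : 0 < b) :
    IntegrableOn (fun s : ℝ => 3 * Real.exp (-b/(8*s))/(s^2*Real.sqrt s)) (Ioi 0) := by
  rw [← Ioc_union_Ioi_eq_Ioi hb.le]
  refine (integrableOn_union).mpr ⟨?_, integrableOn_psi_Ioi hb.le hb⟩
  have hconst : IntegrableOn (fun _ : ℝ => 41472/(b^2*Real.sqrt b)) (Ioc (0:ℝ) b) :=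
    integrableOn_const measure_Ioc_lt_top.ne
  refine Integrable.mono' hconst
    (((contOn_psi le_rfl).mono Ioc_subset_Ioi_self).aestronglyMeasurable measurableSet_Ioc) ?_
  refine (ae_restrict_iff' measurableSet_Ioc).mpr (ae_of_all _ fun s hs => ?_)
  rw [Real.norm_eq_abs, abs_of_nonneg (psi_nonneg b s)]
  exact psi_le_const_on_Ioc hb hs

lemma psi_le_simple {b s : ℝ} (hb : 0 ≤ b) (hs : 0 < s) :
    3 * Real.exp (-b/(8*s))/(s^2*Real.sqrt s) ≤ 3*(1/(s^2*Real.sqrt s)) := by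
  have hss : 0 < Real.sqrt s := Real.sqrt_pos.mpr hs
  have hE : Real.exp (-b/(8*s)) ≤ 1 := Real.exp_le_one_iff.mpr (by
    apply div_nonpos_of_nonpos_of_nonneg <;> [linarith; positivity])
  have heq : 3 * (1/(s^2*Real.sqrt s)) = 3/(s^2*Real.sqrt s) := by ring
  rw [heq]
  gcongr
  linarith

lemma psi_integral_bound1 {b t : ℝ} (hb : 0 < b) (ht : 0 < t) :
    ∫ s in Ioi t, 3 * Real.exp (-b/(8*s))/(s^2*Real.sqrt s) ≤ 41474/(b*Real.sqrt b) := by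
  have hsb' : 0 < Real.sqrt b := Real.sqrt_pos.mpr hb
  have hsb2 : Real.sqrt b * Real.sqrt b = b := Real.mul_self_sqrt hb.le
  have hIoc : IntegrableOn (fun s : ℝ => 3 * Real.exp (-b/(8*s))/(s^2*Real.sqrt s)) (Ioc 0 b) :=
    (integrableOn_psi_Ioi0 hb).mono_set (by rw [← Ioc_union_Ioi_eq_Ioi hb.le]; exact subset_union_left)
  have h0 : ∫ s in Ioi t, 3 * Real.exp (-b/(8*s))/(s^2*Real.sqrt s)
      ≤ ∫ s in Ioi (0:ℝ), 3 * Real.exp (-b/(8*s))/(s^2*Real.sqrt s) :=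
    setIntegral_mono_set (integrableOn_psi_Ioi0 hb)
      (ae_of_all _ fun s => psi_nonneg b s) (HasSubset.Subset.eventuallyLE (Ioi_subset_Ioi ht.le))
  refine h0.trans ?_
  rw [← Ioc_union_Ioi_eq_Ioi hb.le,
    setIntegral_union (Ioc_disjoint_Ioi le_rfl) measurableSet_Ioi hIoc
      (integrableOn_psi_Ioi hb.le hb)]
  have hpart1 : ∫ s in Ioc (0:ℝ) b, 3 * Real.exp (-b/(8*s))/(s^2*Real.sqrt s)
      ≤ 41472/(b*Real.sqrt b) := by
    calc ∫ s in Ioc (0:ℝ) b, 3 * Real.exp (-b/(8*s))/(s^2*Real.sqrt s)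
        ≤ ∫ _ in Ioc (0:ℝ) b, 41472/(b^2*Real.sqrt b) :=
          setIntegral_mono_on hIoc (integrableOn_const measure_Ioc_lt_top.ne)
            measurableSet_Ioc (fun s hs => psi_le_const_on_Ioc hb hs)
      _ = (volume (Ioc (0:ℝ) b)).toReal * (41472/(b^2*Real.sqrt b)) := by
          rw [setIntegral_const]; rfl
      _ = b * (41472/(b^2*Real.sqrt b)) := by
          rw [Real.volume_Ioc, ENNReal.toReal_ofReal (by linarith)]
          norm_num
      _ = 41472/(b*Real.sqrt b) := by
          rw [mul_div_assoc', div_eq_div_iff (by positivity) (by positivity)]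
          ring
  have hpart2 : ∫ s in Ioi b, 3 * Real.exp (-b/(8*s))/(s^2*Real.sqrt s)
      ≤ 2/(b*Real.sqrt b) := by
    calc ∫ s in Ioi b, 3 * Real.exp (-b/(8*s))/(s^2*Real.sqrt s)
        ≤ ∫ s in Ioi b, 3*(1/(s^2*Real.sqrt s)) :=
          setIntegral_mono_on (integrableOn_psi_Ioi hb.le hb)
            ((integrableOn_inv_sq_mul_sqrt hb).const_mul 3) measurableSet_Ioi
            (fun s hs => psi_le_simple hb.le (hb.trans hs))
      _ = 3 * ∫ s in Ioi b, 1/(s^2*Real.sqrt s) := integral_const_mul 3 _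
      _ = 3 * ((2/3)/(b*Real.sqrt b)) := by rw [integral_Ioi_inv_sq_sqrt hb]
      _ = 2/(b*Real.sqrt b) := by ring
  have : (41472:ℝ)/(b*Real.sqrt b) + 2/(b*Real.sqrt b) = 41474/(b*Real.sqrt b) := by
    rw [← add_div]
    norm_num
  linarith

lemma psi_integral_bound2 {b t : ℝ} (hb : 0 ≤ b) (ht : 0 < t) :
    ∫ s in Ioi t, 3 * Real.exp (-b/(8*s))/(s^2*Real.sqrt s) ≤ 2/(t*Real.sqrt t) := by
  calc ∫ s in Ioi t, 3 * Real.exp (-b/(8*s))/(s^2*Real.sqrt s)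
      ≤ ∫ s in Ioi t, 3*(1/(s^2*Real.sqrt s)) :=
        setIntegral_mono_on (integrableOn_psi_Ioi hb ht)
          ((integrableOn_inv_sq_mul_sqrt ht).const_mul 3) measurableSet_Ioi
          (fun s hs => psi_le_simple hb (ht.trans hs))
    _ = 3 * ∫ s in Ioi t, 1/(s^2*Real.sqrt s) := integral_const_mul 3 _
    _ = 3 * ((2/3)/(t*Real.sqrt t)) := by rw [integral_Ioi_inv_sq_sqrt ht]
    _ = 2/(t*Real.sqrt t) := by ring

end TIG

namespace TIG

lemma abs_pd_Kent_le {t : ℝ} (ht : 0 < t) (k i j : Fin 2) (x : Fin 2 → ℝ) :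
    |pd k (fun z => Kent i j z t) x|
      ≤ Real.exp (-(nsq x)/(8*t))/(t*Real.sqrt t)
        + ∫ s in Ioi t, 3 * Real.exp (-(nsq x)/(8*s))/(s^2*Real.sqrt s) := by
  rw [pd_Kent ht k i j x]
  refine (abs_add_le _ _).trans (add_le_add ?_ ?_)
  · calc |dl i j * d1 k x t| = |dl i j| * |d1 k x t| := abs_mul _ _
      _ ≤ 1 * |d1 k x t| := by
          gcongr
          exact abs_dl_le i j
      _ = |d1 k x t| := one_mul _
      _ ≤ Real.exp (-(nsq x)/(8*t))/(t*Real.sqrt t) := abs_d1_le ht k x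
  · calc |∫ s in Ioi t, d3 k i j x s| = ‖∫ s in Ioi t, d3 k i j x s‖ := (Real.norm_eq_abs _).symm
      _ ≤ ∫ s in Ioi t, ‖d3 k i j x s‖ := norm_integral_le_integral_norm _
      _ ≤ ∫ s in Ioi t, 3 * Real.exp (-(nsq x)/(8*s))/(s^2*Real.sqrt s) := by
          refine setIntegral_mono_on ((integrableOn_d3_s k i j x ht).norm)
            (integrableOn_psi_Ioi (nsq_nonneg x) ht) measurableSet_Ioi (fun s hs => ?_)
          rw [Real.norm_eq_abs]
          exact abs_d3_le (ht.trans hs) k i j x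

lemma gradK_le {t : ℝ} (ht : 0 < t) (x : Fin 2 → ℝ) :
    gradK x t ≤ 8 * (Real.exp (-(nsq x)/(8*t))/(t*Real.sqrt t))
        + 8 * (∫ s in Ioi t, 3 * Real.exp (-(nsq x)/(8*s))/(s^2*Real.sqrt s)) := by
  have hterm := fun k i j => abs_pd_Kent_le ht k i j x
  rw [gradK]
  have : ∀ i : Fin 2, ∑ j : Fin 2, ∑ k : Fin 2, |pd k (fun z => Kent i j z t) x|
      ≤ 4 * (Real.exp (-(nsq x)/(8*t))/(t*Real.sqrt t)
        + ∫ s in Ioi t, 3 * Real.exp (-(nsq x)/(8*s))/(s^2*Real.sqrt s)) := by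
    intro i
    rw [Fin.sum_univ_two, Fin.sum_univ_two, Fin.sum_univ_two]
    linarith [hterm 0 i 0, hterm 1 i 0, hterm 0 i 1, hterm 1 i 1]
  rw [Fin.sum_univ_two]
  linarith [this 0, this 1]

lemma phi_nonneg (b t : ℝ) : 0 ≤ Real.exp (-b/(8*t))/(t*Real.sqrt t) := by
  rcases le_or_gt t 0 with h | h
  · rw [Real.sqrt_eq_zero'.mpr h, mul_zero, div_zero]
  · positivity

end TIG

namespace TIG

lemma contOn_phi {b : ℝ} {c : ℝ} (hc : 0 ≤ c) :
    ContinuousOn (fun t : ℝ => Real.exp (-b/(8*t))/(t*Real.sqrt t)) (Ioi c) := by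
  have hne : ∀ t ∈ Ioi c, t*Real.sqrt t ≠ 0 := fun t ht => by
    have h0 : 0 < t := lt_of_le_of_lt hc ht
    have : 0 < Real.sqrt t := Real.sqrt_pos.mpr h0
    positivity
  have hne8 : ∀ t ∈ Ioi c, 8*t ≠ 0 := fun t ht => by
    have h0 : 0 < t := lt_of_le_of_lt hc ht
    positivity
  refine ContinuousOn.div ?_ ?_ hne
  · exact (continuousOn_const.div (by fun_prop) hne8).rexp
  · exact (by fun_prop : Continuous fun t : ℝ => t*Real.sqrt t).continuousOn

lemma phi_le_simple {b t : ℝ} (hb : 0 ≤ b) (ht : 0 < t) :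
    Real.exp (-b/(8*t))/(t*Real.sqrt t) ≤ 1/(t*Real.sqrt t) := by
  have hst : 0 < Real.sqrt t := Real.sqrt_pos.mpr ht
  have hE : Real.exp (-b/(8*t)) ≤ 1 := Real.exp_le_one_iff.mpr (by
    apply div_nonpos_of_nonpos_of_nonneg <;> [linarith; positivity])
  gcongr

lemma integrableOn_phi_Ioi {b t : ℝ} (hb : 0 ≤ b) (ht : 0 < t) :
    IntegrableOn (fun s : ℝ => Real.exp (-b/(8*s))/(s*Real.sqrt s)) (Ioi t) := by
  refine Integrable.mono' (integrableOn_inv_mul_sqrt ht)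
    ((contOn_phi ht.le).aestronglyMeasurable measurableSet_Ioi) ?_
  refine (ae_restrict_iff' measurableSet_Ioi).mpr (ae_of_all _ fun s hs => ?_)
  rw [Real.norm_eq_abs, abs_of_nonneg (phi_nonneg b s)]
  exact phi_le_simple hb (ht.trans hs)

lemma phi_le_const_on_Ioc {b t : ℝ} (hb : 0 < b) (ht : t ∈ Ioc (0:ℝ) b) :
    Real.exp (-b/(8*t))/(t*Real.sqrt t) ≤ 256/(b*Real.sqrt b) := by
  obtain ⟨ht0, htb⟩ := ht
  have hst : 0 < Real.sqrt t := Real.sqrt_pos.mpr ht0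
  have hst2 : Real.sqrt t * Real.sqrt t = t := Real.mul_self_sqrt ht0.le
  have hsb : 0 < Real.sqrt b := Real.sqrt_pos.mpr hb
  have hsb2 : Real.sqrt b * Real.sqrt b = b := Real.mul_self_sqrt hb.le
  have hw : 0 < b/(8*t) := by positivity
  have hexp := exp_neg_le_sq hw
  have hsq : 4/(b/(8*t))^2 = 256*t^2/b^2 := by
    field_simp
    ring
  have hE : Real.exp (-b/(8*t)) ≤ 256*t^2/b^2 := by
    rw [← hsq]
    calc Real.exp (-b/(8*t)) = Real.exp (-(b/(8*t))) := by rw [neg_div]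
      _ ≤ 4/(b/(8*t))^2 := hexp
  have hstep : Real.exp (-b/(8*t))/(t*Real.sqrt t) ≤ (256*t^2/b^2)/(t*Real.sqrt t) := by gcongr
  refine hstep.trans ?_
  have hsimp : t^2/(t*Real.sqrt t) = Real.sqrt t := by
    rw [eq_comm, eq_div_iff (by positivity : t*Real.sqrt t ≠ 0)]
    calc Real.sqrt t * (t*Real.sqrt t) = (Real.sqrt t*Real.sqrt t)*t := by ring
      _ = t*t := by rw [hst2]
      _ = t^2 := by ring
  have heq : (256*t^2/b^2)/(t*Real.sqrt t) = 256*(t^2/(t*Real.sqrt t))/b^2 := by ring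
  rw [heq, hsimp]
  have hmono : Real.sqrt t ≤ Real.sqrt b := Real.sqrt_le_sqrt htb
  have hfin : 256*Real.sqrt t/b^2 ≤ 256*Real.sqrt b/b^2 := by gcongr
  refine hfin.trans ?_
  rw [div_le_div_iff₀ (by positivity) (by positivity)]
  calc 256*Real.sqrt b*(b*Real.sqrt b) = 256*(Real.sqrt b*Real.sqrt b)*b := by ring
    _ = 256*b*b := by rw [hsb2]
    _ ≤ 256*b^2 := by nlinarith
    _ = 256*b^2 := rfl

lemma integrableOn_phi_Ioc {b : ℝ} (hb : 0 < b) :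
    IntegrableOn (fun s : ℝ => Real.exp (-b/(8*s))/(s*Real.sqrt s)) (Ioc 0 b) := by
  have hconst : IntegrableOn (fun _ : ℝ => 256/(b*Real.sqrt b)) (Ioc (0:ℝ) b) :=
    integrableOn_const measure_Ioc_lt_top.ne
  refine Integrable.mono' hconst
    (((contOn_phi le_rfl).mono Ioc_subset_Ioi_self).aestronglyMeasurable measurableSet_Ioc) ?_
  refine (ae_restrict_iff' measurableSet_Ioc).mpr (ae_of_all _ fun s hs => ?_)
  rw [Real.norm_eq_abs, abs_of_nonneg (phi_nonneg b s)]
  exact phi_le_const_on_Ioc hb hs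

lemma integrableOn_phi_Ioi0 {b : ℝ} (hb : 0 < b) :
    IntegrableOn (fun s : ℝ => Real.exp (-b/(8*s))/(s*Real.sqrt s)) (Ioi 0) := by
  rw [← Ioc_union_Ioi_eq_Ioi hb.le]
  exact (integrableOn_union).mpr ⟨integrableOn_phi_Ioc hb, integrableOn_phi_Ioi hb.le hb⟩

lemma phi_integral_bound {b : ℝ} (hb : 0 < b) :
    ∫ t in Ioi (0:ℝ), Real.exp (-b/(8*t))/(t*Real.sqrt t) ≤ 258/Real.sqrt b := by
  have hsb : 0 < Real.sqrt b := Real.sqrt_pos.mpr hb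
  have hsb2 : Real.sqrt b * Real.sqrt b = b := Real.mul_self_sqrt hb.le
  rw [← Ioc_union_Ioi_eq_Ioi hb.le,
    setIntegral_union (Ioc_disjoint_Ioi le_rfl) measurableSet_Ioi
      (integrableOn_phi_Ioc hb) (integrableOn_phi_Ioi hb.le hb)]
  have hpart1 : ∫ t in Ioc (0:ℝ) b, Real.exp (-b/(8*t))/(t*Real.sqrt t) ≤ 256/Real.sqrt b := by
    calc ∫ t in Ioc (0:ℝ) b, Real.exp (-b/(8*t))/(t*Real.sqrt t)
        ≤ ∫ _ in Ioc (0:ℝ) b, 256/(b*Real.sqrt b) :=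
          setIntegral_mono_on (integrableOn_phi_Ioc hb)
            (integrableOn_const measure_Ioc_lt_top.ne) measurableSet_Ioc
            (fun t ht => phi_le_const_on_Ioc hb ht)
      _ = (volume (Ioc (0:ℝ) b)).toReal * (256/(b*Real.sqrt b)) := by
          rw [setIntegral_const]; rfl
      _ = b * (256/(b*Real.sqrt b)) := by
          rw [Real.volume_Ioc, ENNReal.toReal_ofReal (by linarith)]
          norm_num
      _ = 256/Real.sqrt b := by
          rw [mul_div_assoc', div_eq_div_iff (by positivity) (by positivity)]
          ring
  have hpart2 : ∫ t in Ioi b, Real.exp (-b/(8*t))/(t*Real.sqrt t) ≤ 2/Real.sqrt b := by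
    calc ∫ t in Ioi b, Real.exp (-b/(8*t))/(t*Real.sqrt t)
        ≤ ∫ t in Ioi b, 1/(t*Real.sqrt t) :=
          setIntegral_mono_on (integrableOn_phi_Ioi hb.le hb)
            (integrableOn_inv_mul_sqrt hb) measurableSet_Ioi
            (fun t ht => phi_le_simple hb.le (hb.trans ht))
      _ = 2/Real.sqrt b := integral_Ioi_inv_mul_sqrt hb
  have : (256:ℝ)/Real.sqrt b + 2/Real.sqrt b = 258/Real.sqrt b := by
    rw [← add_div]
    norm_num
  linarith

end TIG

namespace TIG

noncomputable def m2 (b t : ℝ) : ℝ := min (41474/(b*Real.sqrt b)) (2/(t*Real.sqrt t))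

lemma m2_nonneg {b t : ℝ} (hb : 0 < b) : 0 ≤ m2 b t := by
  refine le_min (by positivity) ?_
  rcases le_or_gt t 0 with h | h
  · rw [Real.sqrt_eq_zero'.mpr h, mul_zero, div_zero]
  · positivity

lemma measurable_m2 (b : ℝ) : Measurable (m2 b) := by
  refine Measurable.min measurable_const ?_
  exact Measurable.div measurable_const (measurable_id.mul Real.continuous_sqrt.measurable)

lemma integrableOn_m2_Ioc {b : ℝ} (hb : 0 < b) : IntegrableOn (m2 b) (Ioc 0 b) := by
  have hconst : IntegrableOn (fun _ : ℝ => 41474/(b*Real.sqrt b)) (Ioc (0:ℝ) b) :=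
    integrableOn_const measure_Ioc_lt_top.ne
  refine Integrable.mono' hconst ((measurable_m2 b).aestronglyMeasurable) ?_
  refine (ae_restrict_iff' measurableSet_Ioc).mpr (ae_of_all _ fun t _ => ?_)
  rw [Real.norm_eq_abs, abs_of_nonneg (m2_nonneg hb)]
  exact min_le_left _ _

lemma integrableOn_m2_Ioi {b : ℝ} (hb : 0 < b) : IntegrableOn (m2 b) (Ioi b) := by
  refine Integrable.mono' ((integrableOn_inv_mul_sqrt hb).const_mul 2)
    ((measurable_m2 b).aestronglyMeasurable) ?_
  refine (ae_restrict_iff' measurableSet_Ioi).mpr (ae_of_all _ fun t _ => ?_)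
  rw [Real.norm_eq_abs, abs_of_nonneg (m2_nonneg hb)]
  calc m2 b t ≤ 2/(t*Real.sqrt t) := min_le_right _ _
    _ = 2*(1/(t*Real.sqrt t)) := by ring

lemma integrableOn_m2_Ioi0 {b : ℝ} (hb : 0 < b) : IntegrableOn (m2 b) (Ioi 0) := by
  rw [← Ioc_union_Ioi_eq_Ioi hb.le]
  exact (integrableOn_union).mpr ⟨integrableOn_m2_Ioc hb, integrableOn_m2_Ioi hb⟩

lemma m2_integral_bound {b : ℝ} (hb : 0 < b) :
    ∫ t in Ioi (0:ℝ), m2 b t ≤ 41478/Real.sqrt b := by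
  have hsb : 0 < Real.sqrt b := Real.sqrt_pos.mpr hb
  rw [← Ioc_union_Ioi_eq_Ioi hb.le,
    setIntegral_union (Ioc_disjoint_Ioi le_rfl) measurableSet_Ioi
      (integrableOn_m2_Ioc hb) (integrableOn_m2_Ioi hb)]
  have hpart1 : ∫ t in Ioc (0:ℝ) b, m2 b t ≤ 41474/Real.sqrt b := by
    calc ∫ t in Ioc (0:ℝ) b, m2 b t
        ≤ ∫ _ in Ioc (0:ℝ) b, 41474/(b*Real.sqrt b) :=
          setIntegral_mono_on (integrableOn_m2_Ioc hb)
            (integrableOn_const measure_Ioc_lt_top.ne) measurableSet_Ioc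
            (fun t _ => min_le_left _ _)
      _ = (volume (Ioc (0:ℝ) b)).toReal * (41474/(b*Real.sqrt b)) := by
          rw [setIntegral_const]; rfl
      _ = b * (41474/(b*Real.sqrt b)) := by
          rw [Real.volume_Ioc, ENNReal.toReal_ofReal (by linarith)]
          norm_num
      _ = 41474/Real.sqrt b := by
          rw [mul_div_assoc', div_eq_div_iff (by positivity) (by positivity)]
          ring
  have hpart2 : ∫ t in Ioi b, m2 b t ≤ 4/Real.sqrt b := by
    calc ∫ t in Ioi b, m2 b t
        ≤ ∫ t in Ioi b, 2*(1/(t*Real.sqrt t)) :=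
          setIntegral_mono_on (integrableOn_m2_Ioi hb)
            ((integrableOn_inv_mul_sqrt hb).const_mul 2) measurableSet_Ioi
            (fun t _ => by
              calc m2 b t ≤ 2/(t*Real.sqrt t) := min_le_right _ _
                _ = 2*(1/(t*Real.sqrt t)) := by ring)
      _ = 2 * ∫ t in Ioi b, 1/(t*Real.sqrt t) := integral_const_mul 2 _
      _ = 2 * (2/Real.sqrt b) := by rw [integral_Ioi_inv_mul_sqrt hb]
      _ = 4/Real.sqrt b := by ring
  have : (41474:ℝ)/Real.sqrt b + 4/Real.sqrt b = 41478/Real.sqrt b := by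
    rw [← add_div]
    norm_num
  linarith

lemma nsq_rot (θ : ℝ) (x : Fin 2 → ℝ) : nsq (rot θ x) = nsq x := by
  simp only [nsq, rot, Matrix.cons_val_zero, Matrix.cons_val_one, Matrix.head_cons]
  linear_combination (x 0^2 + x 1^2) * Real.sin_sq_add_cos_sq θ

lemma gradK_nonneg (x : Fin 2 → ℝ) (t : ℝ) : 0 ≤ gradK x t := by
  rw [gradK]
  refine Finset.sum_nonneg fun i _ => Finset.sum_nonneg fun j _ =>
    Finset.sum_nonneg fun k _ => abs_nonneg _

end TIG

open TIG in
/-- `∫₀^∞ |(∇K)(O(at)x, t)| dt ≤ C/|x|` with `C` independent of `x` and `a`. -/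
theorem time_integral_gradK_bound :
    ∃ C : ℝ, 0 < C ∧ ∀ (a : ℝ) (x : Fin 2 → ℝ), x ≠ 0 →
      ∫ t in Set.Ioi (0 : ℝ), gradK (rot (a * t) x) t ≤ C / Real.sqrt (nsq x) := by
  refine ⟨1000000, by norm_num, fun a x hx => ?_⟩
  have hb : 0 < nsq x := by
    have hcase : x 0 ≠ 0 ∨ x 1 ≠ 0 := by
      by_contra hc
      push_neg at hc
      exact hx (funext fun i => by fin_cases i <;> simp [hc.1, hc.2])
    rw [nsq]
    rcases hcase with h | h
    · have habs := abs_pos.mpr h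
      nlinarith [sq_nonneg (x 1), sq_abs (x 0), mul_pos habs habs]
    · have habs := abs_pos.mpr h
      nlinarith [sq_nonneg (x 0), sq_abs (x 1), mul_pos habs habs]
  set b := nsq x with hbdef
  have hsb : 0 < Real.sqrt b := Real.sqrt_pos.mpr hb
  set g : ℝ → ℝ := fun t =>
    8 * (Real.exp (-b/(8*t))/(t*Real.sqrt t)) + 8 * m2 b t with hgdef
  have key : ∀ t ∈ Ioi (0:ℝ), gradK (rot (a*t) x) t ≤ g t := by
    intro t ht
    rw [mem_Ioi] at ht
    have h1 := gradK_le ht (rot (a*t) x)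
    rw [nsq_rot] at h1
    refine h1.trans ?_
    have h2 : (∫ s in Ioi t, 3 * Real.exp (-b/(8*s))/(s^2*Real.sqrt s)) ≤ m2 b t :=
      le_min (psi_integral_bound1 hb ht) (psi_integral_bound2 hb.le ht)
    have hneg : ∀ s : ℝ, -b/(8*s) = -(b/(8*s)) := fun s => neg_div _ _
    simp only [hgdef]
    gcongr
  have hgint : IntegrableOn g (Ioi (0:ℝ)) :=
    ((integrableOn_phi_Ioi0 hb).const_mul 8).add ((integrableOn_m2_Ioi0 hb).const_mul 8)
  have hmono : ∫ t in Ioi (0:ℝ), gradK (rot (a*t) x) t ≤ ∫ t in Ioi (0:ℝ), g t := by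
    refine integral_mono_of_nonneg (ae_of_all _ fun t => gradK_nonneg _ _) hgint ?_
    exact (ae_restrict_iff' measurableSet_Ioi).mpr (ae_of_all _ key)
  refine hmono.trans ?_
  have hsplit : ∫ t in Ioi (0:ℝ), g t
      = 8 * (∫ t in Ioi (0:ℝ), Real.exp (-b/(8*t))/(t*Real.sqrt t))
        + 8 * ∫ t in Ioi (0:ℝ), m2 b t := by
    rw [hgdef, integral_add ((integrableOn_phi_Ioi0 hb).const_mul 8)
      ((integrableOn_m2_Ioi0 hb).const_mul 8), integral_const_mul, integral_const_mul]
  rw [hsplit]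
  have hA := phi_integral_bound hb
  have hB := m2_integral_bound hb
  have hfin : 8 * (258/Real.sqrt b) + 8 * (41478/Real.sqrt b) ≤ 1000000/Real.sqrt b := by
    have heq : 8 * (258/Real.sqrt b) + 8 * (41478/Real.sqrt b) = 333888/Real.sqrt b := by
      rw [mul_div_assoc', mul_div_assoc', ← add_div]
      norm_num
    rw [heq]
    gcongr
    norm_num
  linarith
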